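/- The state-space realization (A, B, C) with A = diag(ν_1,…,ν_n) − B·eₙᵀ, B = (α_1,…,α_n)ᵀ, C = (h_1,…,h_n), eₙ the all-ones vector, has transfer function C(ξI − A)⁻¹B equal to the barycentric rational function (Σ_j α_j h_j/(ξ − ν_j))/(1 + Σ_j α_j/(ξ − ν_j)), for every ξ at which ξI − A is invertible and ξ ≠ ν_j for all j. -/

import Mathlib

open Matrix

theorem aaa_realization_transfer_function (n : ℕ) (hn : 1 ≤ n)
    (ν α h : Fin n → ℂ) (hν : Function.Injective ν)
    (A : Matrix (Fin n) (Fin n) ℂ)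
    (hA : A = Matrix.diagonal ν - Matrix.vecMulVec α (fun _ => 1))
    (ξ : ℂ) (hξ : ∀ j, ξ ≠ ν j)
    (hinv : IsUnit (ξ • (1 : Matrix (Fin n) (Fin n) ℂ) - A).det) :
    h ⬝ᵥ (ξ • (1 : Matrix (Fin n) (Fin n) ℂ) - A)⁻¹.mulVec α
      = (∑ j, α j * h j / (ξ - ν j)) / (1 + ∑ j, α j / (ξ - ν j)) := by
  set M : Matrix (Fin n) (Fin n) ℂ := ξ • (1 : Matrix (Fin n) (Fin n) ℂ) - A with hM
  have hξν : ∀ j, ξ - ν j ≠ 0 := fun j => sub_ne_zero.mpr (hξ j)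
  set s : ℂ := ∑ j, α j / (ξ - ν j) with hs
  -- entrywise formula for M.mulVec
  have hMmul : ∀ x : Fin n → ℂ, M.mulVec x = fun i => (ξ - ν i) * x i + α i * ∑ j, x j := by
    intro x
    funext i
    simp only [hM, hA, Matrix.mulVec, dotProduct, Matrix.sub_apply, Matrix.smul_apply,
      Matrix.one_apply, Matrix.diagonal_apply, Matrix.vecMulVec_apply, smul_eq_mul, mul_one]
    have key : ∀ j, (ξ * (if i = j then 1 else 0) - ((if i = j then ν i else 0) - α i)) * x j
        = (if i = j then (ξ - ν i) * x i else 0) + α i * x j := by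
      intro j
      split_ifs with hij
      · subst hij; ring
      · ring
    rw [Finset.sum_congr rfl (fun j _ => key j), Finset.sum_add_distrib,
      Finset.sum_ite_eq, Finset.mul_sum]
    simp
  -- M⁻¹ cancellation
  have hMinv : ∀ x : Fin n → ℂ, M⁻¹.mulVec (M.mulVec x) = x := by
    intro x
    rw [Matrix.mulVec_mulVec, Matrix.nonsing_inv_mul M hinv, Matrix.one_mulVec]
  -- 1 + s ≠ 0
  have hs0 : 1 + s ≠ 0 := by
    intro h0
    set y : Fin n → ℂ := fun j => α j / (ξ - ν j) with hy
    have hMy : M.mulVec y = 0 := by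
      rw [hMmul]
      funext i
      have : (∑ j, y j) = s := rfl
      simp only [this, hy]
      rw [mul_div_cancel₀ _ (hξν i)]
      have hsm : s = -1 := by linear_combination h0
      change α i + α i * s = (0 : Fin n → ℂ) i
      rw [hsm]; simp
    have hy0 : y = 0 := by
      have := hMinv y
      rw [hMy, Matrix.mulVec_zero] at this
      exact this.symm
    have : s = 0 := by
      rw [hs]
      apply Finset.sum_eq_zero
      intro j _
      have := congrFun hy0 j
      simpa [hy] using this
    rw [this] at h0
    simp at h0
  -- explicit solution
  set x : Fin n → ℂ := fun j => α j / (ξ - ν j) / (1 + s) with hx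
  have hsum : (∑ j, x j) = s / (1 + s) := by
    rw [hx, hs, Finset.sum_div]
  have hMx : M.mulVec x = α := by
    rw [hMmul]
    funext i
    simp only [hsum, hx]
    field_simp
    have e : (ξ - ν i) * α i * (1 + s) = α i * ((ξ - ν i) * (1 + s)) := by ring
    have hs' : (1 + s) * ∑ x, α x / ((1 + s) * (ξ - ν x)) = s := by
      conv_rhs => rw [hs]
      rw [Finset.mul_sum]
      apply Finset.sum_congr rfl
      intro j _
      field_simp [hs0, hξν j]
    rw [div_self (hξν i), hs']
  have hxα : M⁻¹.mulVec α = x := by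
    conv_lhs => rw [← hMx]
    exact hMinv x
  rw [hxα]
  rw [dotProduct, Finset.sum_div]
  apply Finset.sum_congr rfl
  intro j _
  rw [hx]
  field_simp
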